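/- arXiv:2404.08261 — 2 statements merged into one kernel-verified Lean document; each statement's English description precedes it below -/
import Mathlib

section
/- In the N-client proportional-sharing game with utilities U_i(ρ_i) = R·ρ_i/(Σ_j ρ_j) − φ₁ ν_i ρ_i, suppose N ≥ 2, R > 0, φ₁ > 0, all ν_i > 0, and (N−1)ν_i < Σ_{j=1}^N ν_j for all i. Then the unique interior Nash equilibrium is ρ_i* = R(N−1)/(φ₁ Σ_j ν_j) − (R ν_i/φ₁)·((N−1)/Σ_j ν_j)², and at this equilibrium Σ_{i=1}^N ρ_i* = R(N−1)/(φ₁ Σ_j ν_j). -/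
open Finset

lemma diff_eq (R c A x x₀ : ℝ) (hu : x + A ≠ 0) (hu0 : x₀ + A ≠ 0) :
    (R*x₀/(x₀+A) - c*x₀) - (R*x/(x+A) - c*x)
      = (x₀ - x)*(R*A - c*(x+A)*(x₀+A))/((x+A)*(x₀+A)) := by
  field_simp
  ring

lemma max_lemma (R c A x₀ : ℝ) (hc : 0 < c) (hA : 0 < A) (hx₀ : 0 < x₀)
    (hfoc : R * A = c * (x₀ + A)^2) :
    ∀ x : ℝ, 0 < x → R*x/(x+A) - c*x ≤ R*x₀/(x₀+A) - c*x₀ := by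
  intro x hx
  have hu : 0 < x + A := by linarith
  have hu0 : 0 < x₀ + A := by linarith
  rw [← sub_nonneg, diff_eq R c A x x₀ hu.ne' hu0.ne']
  apply div_nonneg _ (by positivity)
  have hid : (x₀ - x)*(R*A - c*(x+A)*(x₀+A)) = c*(x₀+A)*(x₀-x)^2 := by
    linear_combination (x₀ - x) * hfoc
  rw [hid]
  exact mul_nonneg (mul_nonneg hc.le hu0.le) (sq_nonneg _)

lemma foc_lemma (R c A x₀ : ℝ) (hR : 0 < R) (hc : 0 < c) (hA : 0 < A) (hx₀ : 0 < x₀)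
    (h : ∀ x : ℝ, 0 < x → R*x/(x+A) - c*x ≤ R*x₀/(x₀+A) - c*x₀) :
    R * A = c * (x₀ + A)^2 := by
  by_contra hne
  have hu0 : 0 < x₀ + A := by linarith
  rcases lt_or_gt_of_ne hne with hlt | hgt
  · set u₀ := x₀ + A with hu₀def
    have hb : R*A/(c*u₀) < u₀ := by
      rw [div_lt_iff₀ (by positivity)]
      nlinarith
    set m := max A (R*A/(c*u₀)) with hm
    have hmlt : m < u₀ := by
      apply max_lt (by linarith) hb
    set u := (u₀ + m)/2 with hu
    have h1 : m < u := by rw [hu]; linarith [le_max_left A (R*A/(c*u₀))]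
    have h2 : u < u₀ := by rw [hu]; linarith
    have hA' : A < u := lt_of_le_of_lt (le_max_left _ _) h1
    have hx : 0 < u - A := by linarith
    have := h (u - A) hx
    rw [← sub_nonneg, diff_eq R c A (u-A) x₀ (by simp; linarith) hu0.ne'] at this
    have hcu : R*A < c*u*u₀ := by
      have : R*A/(c*u₀) < u := lt_of_le_of_lt (le_max_right _ _) h1
      rw [div_lt_iff₀ (by positivity)] at this
      nlinarith
    have hnum : (x₀ - (u - A))*(R*A - c*((u-A)+A)*(x₀+A)) < 0 := by
      have e1 : x₀ - (u - A) > 0 := by simp [hu₀def] at h2 ⊢; linarith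
      have e2 : R*A - c*((u-A)+A)*(x₀+A) < 0 := by
        simp only [sub_add_cancel]
        rw [← hu₀def]; nlinarith
      nlinarith
    have hden : 0 < ((u-A)+A)*(x₀+A) := by
      simp only [sub_add_cancel]; positivity
    linarith [div_neg_of_neg_of_pos hnum hden]
  · set u₀ := x₀ + A with hu₀def
    have hb : u₀ < R*A/(c*u₀) := by
      rw [lt_div_iff₀ (by positivity)]
      nlinarith
    set u := (u₀ + R*A/(c*u₀))/2 with hu
    have h1 : u₀ < u := by rw [hu]; linarith
    have h2 : u < R*A/(c*u₀) := by rw [hu]; linarith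
    have hx : 0 < u - A := by linarith
    have := h (u - A) hx
    rw [← sub_nonneg, diff_eq R c A (u-A) x₀ (by simp; linarith) hu0.ne'] at this
    have hcu : c*u*u₀ < R*A := by
      rw [lt_div_iff₀ (by positivity)] at h2
      nlinarith
    have hnum : (x₀ - (u - A))*(R*A - c*((u-A)+A)*(x₀+A)) < 0 := by
      have e1 : x₀ - (u - A) < 0 := by simp [hu₀def] at h1 ⊢; linarith
      have e2 : R*A - c*((u-A)+A)*(x₀+A) > 0 := by
        simp only [sub_add_cancel]
        rw [← hu₀def]; nlinarith
      nlinarith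
    have hden : 0 < ((u-A)+A)*(x₀+A) := by
      simp only [sub_add_cancel]; positivity
    linarith [div_neg_of_neg_of_pos hnum hden]

/-- Unique interior Nash equilibrium of the proportional-sharing game. -/
theorem nash_equilibrium (N : ℕ) (hN : 2 ≤ N) (R φ₁ : ℝ)
    (hR : 0 < R) (hφ : 0 < φ₁) (ν : Fin N → ℝ) (hν : ∀ i, 0 < ν i)
    (hint : ∀ i, ((N : ℝ) - 1) * ν i < ∑ j, ν j) :
    let S : ℝ := ∑ j, ν j
    let ρstar : Fin N → ℝ := fun i =>
      R * ((N : ℝ) - 1) / (φ₁ * S) - (R * ν i / φ₁) * (((N : ℝ) - 1) / S) ^ 2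
    let U : (Fin N → ℝ) → Fin N → ℝ := fun ρ i =>
      R * ρ i / (∑ j, ρ j) - φ₁ * ν i * ρ i
    (∀ i, ∀ x : ℝ, 0 < x → U (Function.update ρstar i x) i ≤ U ρstar i) ∧
    (∀ ρ : Fin N → ℝ, (∀ i, 0 < ρ i) →
      (∀ i, ∀ x : ℝ, 0 < x → U (Function.update ρ i x) i ≤ U ρ i) →
      ρ = ρstar) ∧
    (∑ i, ρstar i = R * ((N : ℝ) - 1) / (φ₁ * S)) := by
  intro S ρstar U
  have hS : (0:ℝ) < S :=
    Finset.sum_pos (fun i _ => hν i) ⟨⟨0, by omega⟩, Finset.mem_univ _⟩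
  have hN1 : (0:ℝ) < (N:ℝ) - 1 := by
    have : (2:ℝ) ≤ (N:ℝ) := by exact_mod_cast hN
    linarith
  have hupd : ∀ (f : Fin N → ℝ) (i : Fin N) (x : ℝ),
      ∑ j, Function.update f i x j = x + ∑ j ∈ univ.erase i, f j := by
    intro f i x
    rw [Finset.sum_update_of_mem (mem_univ i), Finset.sdiff_singleton_eq_erase]
  have herase : ∀ (f : Fin N → ℝ) (i : Fin N),
      ∑ j, f j = f i + ∑ j ∈ univ.erase i, f j :=
    fun f i => (Finset.add_sum_erase _ _ (mem_univ i)).symm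
  have hene : ∀ i : Fin N, (univ.erase i).Nonempty := by
    intro i
    obtain ⟨j, hj⟩ := Fintype.exists_ne_of_one_lt_card (by simp; omega) i
    exact ⟨j, Finset.mem_erase.mpr ⟨hj, mem_univ j⟩⟩
  have hρpos : ∀ i, 0 < ρstar i := by
    intro i
    have h1 := hint i
    show 0 < R * ((N:ℝ)-1)/(φ₁*S) - (R*ν i/φ₁)*(((N:ℝ)-1)/S)^2
    have heq : R * ((N:ℝ)-1)/(φ₁*S) - (R*ν i/φ₁)*(((N:ℝ)-1)/S)^2
        = (R*((N:ℝ)-1)/(φ₁*S^2)) * (S - ((N:ℝ)-1)*ν i) := by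
      field_simp
    rw [heq]
    exact mul_pos (by positivity) (by linarith)
  -- total sum equals T
  have hsum : ∑ i, ρstar i = R * ((N:ℝ)-1) / (φ₁ * S) := by
    show ∑ i, (R * ((N:ℝ)-1)/(φ₁*S) - (R*ν i/φ₁)*(((N:ℝ)-1)/S)^2) = _
    rw [Finset.sum_sub_distrib, Finset.sum_const, Finset.card_univ, Fintype.card_fin,
      nsmul_eq_mul]
    have h2 : ∑ i, (R*ν i/φ₁)*(((N:ℝ)-1)/S)^2
        = (R/φ₁)*(((N:ℝ)-1)/S)^2 * S := by
      rw [show (S = ∑ j, ν j) from rfl, Finset.mul_sum]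
      apply Finset.sum_congr rfl
      intro i _
      ring
    rw [h2]
    field_simp
    ring
  refine ⟨?_, ?_, hsum⟩
  · -- equilibrium property
    intro i x hx
    set A := ∑ j ∈ univ.erase i, ρstar j with hA
    have hApos : 0 < A :=
      Finset.sum_pos (fun j _ => hρpos j) (hene i)
    have hsplit : ∑ j, ρstar j = ρstar i + A := herase ρstar i
    have hfoc : R * A = φ₁ * ν i * (ρstar i + A)^2 := by
      have hT : ρstar i + A = R*((N:ℝ)-1)/(φ₁*S) := by rw [← hsplit, hsum]
      have hAval : A = R*((N:ℝ)-1)/(φ₁*S) - ρstar i := by linarith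
      rw [hT, hAval]
      show R * (R*((N:ℝ)-1)/(φ₁*S) -
          (R * ((N:ℝ)-1)/(φ₁*S) - (R*ν i/φ₁)*(((N:ℝ)-1)/S)^2))
        = φ₁ * ν i * (R*((N:ℝ)-1)/(φ₁*S))^2
      field_simp
      ring
    have hmax := max_lemma R (φ₁ * ν i) A (ρstar i)
      (mul_pos hφ (hν i)) hApos (hρpos i) hfoc x hx
    show R * Function.update ρstar i x i / (∑ j, Function.update ρstar i x j)
        - φ₁ * ν i * Function.update ρstar i x i
        ≤ R * ρstar i / (∑ j, ρstar j) - φ₁ * ν i * ρstar i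
    rw [hupd ρstar i x, Function.update_self, hsplit, ← hA]
    exact hmax
  · -- uniqueness
    intro ρ hpos hbest
    have hSgpos : 0 < ∑ j, ρ j :=
      Finset.sum_pos (fun i _ => hpos i) ⟨⟨0, by omega⟩, Finset.mem_univ _⟩
    set Sg := ∑ j, ρ j with hSg
    have hkey : ∀ i, R * (Sg - ρ i) = φ₁ * ν i * Sg^2 := by
      intro i
      set A := ∑ j ∈ univ.erase i, ρ j with hA
      have hApos : 0 < A := Finset.sum_pos (fun j _ => hpos j) (hene i)
      have hsplit : Sg = ρ i + A := herase ρ i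
      have h' : ∀ x : ℝ, 0 < x →
          R*x/(x+A) - φ₁ * ν i * x ≤ R*(ρ i)/(ρ i+A) - φ₁ * ν i * (ρ i) := by
        intro x hx
        have := hbest i x hx
        show R*x/(x+A) - φ₁ * ν i * x ≤ R*(ρ i)/(ρ i+A) - φ₁ * ν i * (ρ i)
        have e1 : U (Function.update ρ i x) i = R*x/(x+A) - φ₁ * ν i * x := by
          show R * Function.update ρ i x i / (∑ j, Function.update ρ i x j)
              - φ₁ * ν i * Function.update ρ i x i = _
          rw [hupd ρ i x, Function.update_self, ← hA]
        have e2 : U ρ i = R*(ρ i)/(ρ i+A) - φ₁ * ν i * (ρ i) := by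
          show R * ρ i / (∑ j, ρ j) - φ₁ * ν i * ρ i = _
          rw [← hSg, hsplit]
        rw [e1, e2] at this
        exact this
      have := foc_lemma R (φ₁ * ν i) A (ρ i) hR (mul_pos hφ (hν i)) hApos (hpos i) h'
      rw [← hsplit] at this
      have hAval : A = Sg - ρ i := by rw [hsplit]; ring
      rw [hAval] at this
      exact this
    have hSgval : Sg = R * ((N:ℝ)-1) / (φ₁ * S) := by
      have hsum2 : ∑ i, (R * (Sg - ρ i)) = ∑ i, (φ₁ * ν i * Sg^2) :=
        Finset.sum_congr rfl (fun i _ => hkey i)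
      rw [← Finset.mul_sum, Finset.sum_sub_distrib, Finset.sum_const, Finset.card_univ,
        Fintype.card_fin, nsmul_eq_mul, ← hSg] at hsum2
      have hsum3 : ∑ i, (φ₁ * ν i * Sg^2) = φ₁ * S * Sg^2 := by
        rw [Finset.sum_congr rfl (fun i _ => show φ₁ * ν i * Sg^2 = ν i * (φ₁ * Sg^2) by ring),
          ← Finset.sum_mul]
        show S * (φ₁ * Sg^2) = _
        ring
      rw [hsum3] at hsum2
      have he : (R*((N:ℝ)-1)) * Sg = (φ₁*S*Sg) * Sg := by linear_combination hsum2
      have he2 : R*((N:ℝ)-1) = φ₁*S*Sg := mul_right_cancel₀ hSgpos.ne' he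
      rw [eq_div_iff (by positivity)]
      linarith
    funext i
    have h1 := hkey i
    rw [hSgval] at h1
    show ρ i = R * ((N:ℝ)-1)/(φ₁*S) - (R*ν i/φ₁)*(((N:ℝ)-1)/S)^2
    have hφ' : φ₁ ≠ 0 := hφ.ne'
    have hS' : S ≠ 0 := hS.ne'
    have hR' : R ≠ 0 := hR.ne'
    field_simp at h1 ⊢
    have h2 : R * (φ₁ * S ^ 2 * ρ i)
        = R * (R * ((N:ℝ) - 1) * (S - ((N:ℝ) - 1) * ν i)) := by
      linear_combination (-R) * h1
    exact mul_left_cancel₀ (by positivity) h2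
end

section
/- In the two-stage Stackelberg game where the server chooses rewards R_t and clients choose privacy budgets ρ_i^t, the profile (R_t* = √(A_t π^{1−t}/(1−γ)), ρ_i^{t*} = C_i R_t*) is a Stackelberg Nash Equilibrium: for every t and i, ρ_i^{t*} maximizes U_i^t(·, ρ_{-i}^{t*}, R_t*) over ρ_i^t > 0, and (R_1*,...,R_T*) minimizes U_T(·, ρ*) over all positive reward vectors. -/
/-- AM-GM style inequality: for positive `s, r`, `2 s ≤ s²/r + r`. -/
lemma stackelberg_amgm (s r : ℝ) (hs : 0 < s) (hr : 0 < r) :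
    2 * s ≤ s ^ 2 / r + r := by
  rw [div_add' _ _ _ hr.ne', le_div_iff₀ hr]
  nlinarith [sq_nonneg (s - r)]

set_option maxHeartbeats 1600000 in
/-- The profile `(R_t*, ρ_i^{t*} = C_i R_t*)` is a Stackelberg Nash
Equilibrium: each client's budget is a best response to the optimal reward,
and the optimal reward vector minimizes the server's cost. -/
theorem stackelberg_nash_equilibrium (N T : ℕ) (hN : 2 ≤ N) (hT : 1 ≤ T)
    (β γ lam d C V π φ₁ : ℝ)
    (hβ : 0 < β) (hγ : 0 < γ) (hγ1 : γ < 1) (hlam : 0 < lam) (hd : 0 < d)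
    (hC : 0 < C) (hV : 0 < V) (hπ : 0 < π) (hπ1 : π < 1) (hφ : 0 < φ₁)
    (D : Fin N → ℝ) (hD : ∀ i, 0 < D i)
    (ν : Fin N → ℝ) (hν : ∀ i, 0 < ν i)
    (hint : ∀ i, ((N : ℝ) - 1) * ν i < ∑ j, ν j)
    (Cc : Fin N → ℝ)
    (hCc : ∀ i, Cc i = ((N : ℝ) - 1) * ((∑ j, ν j) - ν i * ((N : ℝ) - 1)) /
      (φ₁ * (∑ j, ν j) ^ 2))
    (A : ℝ)
    (hA : A = ∑ i : Fin N,
      4 * d * γ * β * C ^ 2 / ((T : ℝ) ^ 2 * lam ^ 2 * (N : ℝ) ^ 2 * Cc i * (D i) ^ 2))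
    (Rstar : Fin T → ℝ)
    (hRstar : ∀ t : Fin T, Rstar t = Real.sqrt (A / ((1 - γ) * π ^ (t : ℕ))))
    (ρstar : Fin T → Fin N → ℝ)
    (hρstar : ∀ t i, ρstar t i = Cc i * Rstar t)
    (Ui : ℝ → (Fin N → ℝ) → Fin N → ℝ)
    (hUi : ∀ R ρ i, Ui R ρ i = R * ρ i / (∑ j, ρ j) - φ₁ * ν i * ρ i)
    (UT : (Fin T → ℝ) → (Fin T → Fin N → ℝ) → ℝ)
    (hUT : ∀ R ρ, UT R ρ =
      (2 * β * γ) / (lam ^ 2 * (T : ℝ) ^ 2) *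
        ∑ t : Fin T, (V ^ 2 + (2 * d * C ^ 2 / (N : ℝ) ^ 2) *
          ∑ i : Fin N, 1 / ((D i) ^ 2 * ρ t i)) +
      (1 - γ) * ∑ t : Fin T, π ^ (t : ℕ) * R t) :
    (∀ t : Fin T, ∀ i : Fin N, ∀ x : ℝ, 0 < x →
      Ui (Rstar t) (Function.update (ρstar t) i x) i
        ≤ Ui (Rstar t) (ρstar t) i) ∧
    (∀ R : Fin T → ℝ, (∀ t, 0 < R t) →
      UT Rstar ρstar ≤ UT R (fun t i => Cc i * R t)) := by
  have hNR : (2:ℝ) ≤ (N:ℝ) := by exact_mod_cast hN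
  have hN1 : (0:ℝ) < (N:ℝ) - 1 := by linarith
  have hTR : (1:ℝ) ≤ (T:ℝ) := by exact_mod_cast hT
  have hTR0 : (0:ℝ) < (T:ℝ) := by linarith
  have hγ' : 0 < 1 - γ := by linarith
  have hSν : 0 < ∑ j, ν j :=
    Finset.sum_pos (fun j _ => hν j) ⟨⟨0, by omega⟩, Finset.mem_univ _⟩
  have hCcpos : ∀ i, 0 < Cc i := by
    intro i
    rw [hCc]
    apply div_pos
    · apply mul_pos hN1
      have := hint i
      nlinarith
    · positivity
  have hA0 : 0 < A := by
    rw [hA]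
    apply Finset.sum_pos
    · intro i _
      have := hCcpos i
      have := hD i
      positivity
    · exact ⟨⟨0, by omega⟩, Finset.mem_univ _⟩
  have hRpos : ∀ t, 0 < Rstar t := by
    intro t
    rw [hRstar]
    apply Real.sqrt_pos.mpr
    positivity
  have hRsq : ∀ t : Fin T, (Rstar t) ^ 2 = A / ((1 - γ) * π ^ (t : ℕ)) := by
    intro t
    rw [hRstar]
    exact Real.sq_sqrt (by positivity)
  have hCsum : ∑ j, Cc j = ((N:ℝ) - 1) / (φ₁ * (∑ j, ν j)) := by
    have h1 : ∑ j, Cc j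
        = (∑ j, ((N:ℝ) - 1) * ((∑ k, ν k) - ν j * ((N:ℝ) - 1))) /
          (φ₁ * (∑ j, ν j) ^ 2) := by
      rw [Finset.sum_div]
      exact Finset.sum_congr rfl fun j _ => hCc j
    have h2 : ∑ j, ((N:ℝ) - 1) * ((∑ k, ν k) - ν j * ((N:ℝ) - 1))
        = ((N:ℝ) - 1) * (∑ k, ν k) := by
      rw [← Finset.mul_sum, Finset.sum_sub_distrib, Finset.sum_const, ← Finset.sum_mul,
        Finset.card_univ, Fintype.card_fin]
      ring
    rw [h1, h2]
    field_simp
  constructor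
  · -- clients' best responses
    intro t i x hx
    set R := Rstar t with hR
    have hR0 : 0 < R := hRpos t
    set Sν := ∑ j, ν j with hSνdef
    set S : ℝ := ((N:ℝ) - 1) * R / (φ₁ * Sν) with hSdef
    have hS0 : 0 < S := by positivity
    have hsumρ : ∑ j, ρstar t j = S := by
      have : ∑ j, ρstar t j = (∑ j, Cc j) * R := by
        rw [Finset.sum_mul]
        exact Finset.sum_congr rfl fun j _ => hρstar t j
      rw [this, hCsum, hSdef]
      ring
    set B : ℝ := S - Cc i * R with hBdef
    have hρiS : Cc i * R = S - B := by rw [hBdef]; ring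
    have hB0 : 0 < B := by
      have : B = R * ((N:ℝ) - 1) ^ 2 * ν i / (φ₁ * Sν ^ 2) := by
        rw [hBdef, hSdef, hCc i]
        field_simp
        ring
      rw [this]
      have := hν i
      positivity
    have hkey : R * B = φ₁ * ν i * S ^ 2 := by
      have hBval : B = R * ((N:ℝ) - 1) ^ 2 * ν i / (φ₁ * Sν ^ 2) := by
        rw [hBdef, hSdef, hCc i]
        field_simp
        ring
      rw [hBval, hSdef]
      field_simp
    have hsum_upd : ∑ j, Function.update (ρstar t) i x j = x + B := by
      rw [Finset.sum_update_of_mem (Finset.mem_univ i)]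
      have : ∑ j ∈ Finset.univ \ {i}, ρstar t j
          = (∑ j, ρstar t j) - ρstar t i := by
        rw [Finset.sum_sdiff_eq_sub (Finset.singleton_subset_iff.mpr (Finset.mem_univ i)),
          Finset.sum_singleton]
      rw [this, hsumρ, hρstar t i, hρiS]
      ring
    rw [hUi, hUi, Function.update_self, hsum_upd, hsumρ, hρstar t i, ← hR]
    set k := φ₁ * ν i with hk
    have hk0 : 0 < k := by rw [hk]; exact mul_pos hφ (hν i)
    have hu0 : 0 < x + B := by linarith
    clear_value k B S Sν R
    have lhs_eq : R * x / (x + B) - k * x = (R * x - k * x * (x + B)) / (x + B) := by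
      field_simp
    have rhs_eq : R * (Cc i * R) / S - k * (Cc i * R)
        = (R * (Cc i * R) - k * (Cc i * R) * S) / S := by
      field_simp
    rw [lhs_eq, rhs_eq, div_le_div_iff₀ hu0 hS0, hρiS]
    have hident : (R * (S - B) - k * (S - B) * S) * (x + B)
        - (R * x - k * x * (x + B)) * S = k * S * (S - (x + B)) ^ 2 := by
      linear_combination (S - (x + B)) * hkey
    nlinarith [mul_nonneg (mul_nonneg hk0.le hS0.le) (sq_nonneg (S - (x + B))), hident]
  · -- server's optimal rewards
    intro R hRp
    have hUTval : ∀ (Q : Fin T → ℝ), (∀ t, 0 < Q t) →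
        UT Q (fun t i => Cc i * Q t)
          = (2 * β * γ) / (lam ^ 2 * (T:ℝ) ^ 2) * ((T:ℝ) * V ^ 2)
            + ∑ t : Fin T, (A / Q t + (1 - γ) * π ^ (t : ℕ) * Q t) := by
      intro Q hQ
      rw [hUT]
      have hterm : ∀ t : Fin T,
          V ^ 2 + (2 * d * C ^ 2 / (N:ℝ) ^ 2) * ∑ i : Fin N, 1 / ((D i) ^ 2 * (Cc i * Q t))
            = V ^ 2 + (lam ^ 2 * (T:ℝ) ^ 2) / (2 * β * γ) * (A / Q t) := by
        intro t
        congr 1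
        have hsum : ∑ i : Fin N, 1 / ((D i) ^ 2 * (Cc i * Q t))
            = (∑ i : Fin N, 1 / ((D i) ^ 2 * Cc i)) / Q t := by
          rw [Finset.sum_div]
          refine Finset.sum_congr rfl fun i _ => ?_
          rw [div_div, mul_assoc]
        have hX : (2 * d * C ^ 2 / (N:ℝ) ^ 2) * ∑ i : Fin N, 1 / ((D i) ^ 2 * Cc i)
            = (lam ^ 2 * (T:ℝ) ^ 2) / (2 * β * γ) * A := by
          rw [hA, Finset.mul_sum, Finset.mul_sum]
          refine Finset.sum_congr rfl fun i _ => ?_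
          have h1 := (hCcpos i).ne'
          have h2 := (hD i).ne'
          field_simp
          ring
        rw [hsum, ← mul_div_assoc, ← mul_div_assoc, hX]
      rw [Finset.sum_congr rfl fun t _ => hterm t, Finset.sum_add_distrib,
        Finset.sum_const, Finset.card_univ, Fintype.card_fin, nsmul_eq_mul,
        mul_add, add_assoc]
      congr 1
      rw [Finset.mul_sum, Finset.mul_sum, ← Finset.sum_add_distrib]
      refine Finset.sum_congr rfl fun t _ => ?_
      have hone : (2 * β * γ) / (lam ^ 2 * (T:ℝ) ^ 2)
          * ((lam ^ 2 * (T:ℝ) ^ 2) / (2 * β * γ)) = 1 := by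
        field_simp
      rw [← mul_assoc, hone, one_mul]
      ring
    have hρeq : UT Rstar ρstar = UT Rstar (fun t i => Cc i * Rstar t) := by
      have : ρstar = fun t i => Cc i * Rstar t := by
        funext t i
        exact hρstar t i
      rw [this]
    rw [hρeq, hUTval Rstar hRpos, hUTval R hRp]
    refine add_le_add le_rfl (Finset.sum_le_sum fun t _ => ?_)
    set s := Rstar t with hs_def
    set r := R t with hr_def
    set b := (1 - γ) * π ^ (t : ℕ) with hb_def
    have hb : 0 < b := by positivity
    have hs : 0 < s := hRpos t
    have hr : 0 < r := hRp t
    have hA' : A = b * s ^ 2 := by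
      rw [hs_def, hRsq t, ← hb_def]
      field_simp
    calc A / s + b * s = 2 * (b * s) := by
          rw [hA']
          field_simp
          ring
      _ ≤ b * (s ^ 2 / r + r) := by
          nlinarith [stackelberg_amgm s r hs hr, hb]
      _ = A / r + b * r := by rw [hA']; ring
end
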